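/- Let G and H be non-trivial groups and let H act faithfully on a set X such that H_X is not of torsion-type. If G ≀_X H is not finitely generated and H is finitely invariably generated, then G ≀_X H is invariably generated but not finitely invariably generated. -/

import Mathlib

open Function SemidirectProduct

/-- A subset `S` invariably generates `K` if replacing each element of `S` by an
arbitrary conjugate always yields a generating set of `K`. -/
def InvariablyGenerates (K : Type*) [Group K] (S : Set K) : Prop :=
  ∀ a : K → K, Subgroup.closure ((fun s => (a s)⁻¹ * s * a s) '' S) = ⊤

/-- `K` is invariably generated if `K` invariably generates itself. -/
def IsIG (K : Type*) [Group K] : Prop :=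
  InvariablyGenerates K Set.univ

/-- `K` is finitely invariably generated if some finite subset invariably generates it. -/
def IsFIG (K : Type*) [Group K] : Prop :=
  ∃ S : Set K, S.Finite ∧ InvariablyGenerates K S

/-- The base of the wreath product `G ≀_X H`: the restricted direct product
`⨁_{x ∈ X} G`, realized as the finitely supported functions `X → G`. -/
def WreathBase (G X : Type*) [Group G] : Subgroup (X → G) where
  carrier := {f | (mulSupport f).Finite}
  one_mem' := by simp
  mul_mem' {f g} hf hg := (Set.Finite.union hf hg).subset (mulSupport_mul f g)
  inv_mem' {f} hf := by simpa using hf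

lemma mem_wreathBase {G X : Type*} [Group G] {f : X → G} :
    f ∈ WreathBase G X ↔ (mulSupport f).Finite := Iff.rfl

/-- The permutation action of `H` on the base, `(h • f) x = f (h⁻¹ • x)`, so that in the
wreath product conjugation by `h` (i.e. `h · g^{(x)} · h⁻¹`) sends the coordinate subgroup
`G_x` to `G_{h • x}`; equivalently `h⁻¹ · g^{(x)} · h = g^{(h⁻¹ • x)}`, which is the
left-action rendering of "conjugation multiplies indices on the right". -/
def wreathAut (G H X : Type*) [Group G] [Group H] [MulAction H X] :
    H →* MulAut (WreathBase G X) where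
  toFun h :=
    { toFun := fun f => ⟨fun x => (f : X → G) (h⁻¹ • x),
        mem_wreathBase.mpr (((mem_wreathBase.mp f.2).image (h • ·)).subset
          fun x hx => ⟨h⁻¹ • x, hx, by simp⟩)⟩
      invFun := fun f => ⟨fun x => (f : X → G) (h • x),
        mem_wreathBase.mpr (((mem_wreathBase.mp f.2).image (h⁻¹ • ·)).subset
          fun x hx => ⟨h • x, hx, by simp⟩)⟩
      left_inv := fun f => Subtype.ext (funext fun x => by simp)
      right_inv := fun f => Subtype.ext (funext fun x => by simp)
      map_mul' := fun f g => Subtype.ext (funext fun x => by simp) }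
  map_one' := by
    ext f x
    simp
  map_mul' h₁ h₂ := by
    ext f x
    simp [mul_smul]

/-- The restricted wreath product `G ≀_X H`. -/
abbrev WreathProduct (G H X : Type*) [Group G] [Group H] [MulAction H X] :=
  WreathBase G X ⋊[wreathAut G H X] H

open scoped Classical in
/-- `g^{(y)}`: the element of the base which is `g` in coordinate `y` and trivial elsewhere. -/
noncomputable def WreathBase.single {G : Type*} (X : Type*) [Group G] (y : X) :
    G →* WreathBase G X where
  toFun g := ⟨fun x => if x = y then g else 1,
    mem_wreathBase.mpr ((Set.finite_singleton y).subset fun x hx => by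
      by_contra hxy
      exact hx (if_neg hxy))⟩
  map_one' := Subtype.ext (funext fun x => by simp)
  map_mul' g₁ g₂ := Subtype.ext (funext fun x => by by_cases h : x = y <;> simp [h])

/-- The embedding of `G` onto the coordinate subgroup `G_y` of the wreath product. -/
noncomputable def coordHom (G H : Type*) {X : Type*} [Group G] [Group H] [MulAction H X]
    (y : X) : G →* WreathProduct G H X :=
  SemidirectProduct.inl.comp (WreathBase.single X y)

/-- `H_X` is of torsion-type if there is `y ∈ X` such that for every `x` in the `H`-orbit
of `y` and every `k ∈ H`, the `⟨k⟩`-orbit of `x` is finite. -/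
def IsTorsionType (H X : Type*) [Group H] [MulAction H X] : Prop :=
  ∃ y : X, ∀ x ∈ MulAction.orbit H y, ∀ k : H, (Set.range fun n : ℤ => k ^ n • x).Finite

/-- A `Γ_z`-set: a set of base elements containing, for every `g ∈ G`, an element whose
coordinate at `z` is `g`. -/
def IsGammaSet {G X : Type*} [Group G] (z : X) (Γ : Set (WreathBase G X)) : Prop :=
  ∀ g : G, ∃ f ∈ Γ, (f : X → G) z = g

section AuxLemmas

open scoped Classical

variable {G H X : Type*} [Group G] [Group H] [MulAction H X]

lemma aux_single_coe (y : X) (g : G) (p : X) :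
    (WreathBase.single X y g : X → G) p = if p = y then g else 1 := rfl

lemma aux_wreathAut_coe (h : H) (f : WreathBase G X) (p : X) :
    ((wreathAut G H X h f : WreathBase G X) : X → G) p = (f : X → G) (h⁻¹ • p) := rfl

lemma aux_wb_mul_coe (a b : WreathBase G X) (p : X) :
    ((a * b : WreathBase G X) : X → G) p = (a : X → G) p * (b : X → G) p := rfl

lemma aux_wb_inv_coe (a : WreathBase G X) (p : X) :
    ((a⁻¹ : WreathBase G X) : X → G) p = ((a : X → G) p)⁻¹ := rfl

lemma aux_wb_one_coe (p : X) : ((1 : WreathBase G X) : X → G) p = 1 := rfl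

lemma aux_wreathAut_single (h : H) (y : X) (g : G) :
    wreathAut G H X h (WreathBase.single X y g) = WreathBase.single X (h • y) g := by
  refine Subtype.ext (funext fun p => ?_)
  rw [aux_wreathAut_coe, aux_single_coe, aux_single_coe]
  by_cases hp : p = h • y
  · rw [if_pos hp, if_pos (by rw [inv_smul_eq_iff]; exact hp)]
  · rw [if_neg hp, if_neg (by rw [inv_smul_eq_iff]; exact hp)]

lemma aux_conj_single_base (b : WreathBase G X) (y : X) (v : G) :
    b * WreathBase.single X y v * b⁻¹
      = WreathBase.single X y ((b : X → G) y * v * ((b : X → G) y)⁻¹) := by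
  refine Subtype.ext (funext fun p => ?_)
  rw [aux_wb_mul_coe, aux_wb_mul_coe, aux_wb_inv_coe, aux_single_coe, aux_single_coe]
  by_cases hp : p = y
  · rw [if_pos hp, if_pos hp]; subst hp; rfl
  · rw [if_neg hp, if_neg hp, mul_one, mul_inv_cancel]

end AuxLemmas
section AuxLemmas2

open scoped Classical

lemma aux_sdp_ext {N G' : Type*} [Group N] [Group G'] {φ : G' →* MulAut N}
    {a b : N ⋊[φ] G'} (hl : a.left = b.left) (hr : a.right = b.right) : a = b := by
  cases a; cases b
  simp only at hl hr
  subst hl; subst hr; rfl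

variable {G H X : Type*} [Group G] [Group H] [MulAction H X]

lemma aux_aut_cancel (r : H) (f : WreathBase G X) :
    wreathAut G H X r (wreathAut G H X r⁻¹ f) = f := by
  have h1 : wreathAut G H X r (wreathAut G H X r⁻¹ f)
      = (wreathAut G H X r * wreathAut G H X r⁻¹) f := rfl
  rw [h1, ← map_mul, mul_inv_cancel, map_one]
  rfl

lemma aux_aut_cancel' (r : H) (f : WreathBase G X) :
    wreathAut G H X r⁻¹ (wreathAut G H X r f) = f := by
  have h1 : wreathAut G H X r⁻¹ (wreathAut G H X r f)
      = (wreathAut G H X r⁻¹ * wreathAut G H X r) f := rfl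
  rw [h1, ← map_mul, inv_mul_cancel, map_one]
  rfl

lemma aux_conj_inl (t : WreathProduct G H X) (σ : WreathBase G X) :
    t * inl σ * t⁻¹ = inl (t.left * wreathAut G H X t.right σ * t.left⁻¹) := by
  refine aux_sdp_ext ?_ ?_ <;>
    simp [mul_left, mul_right, inv_left, inv_right, left_inl, right_inl, map_mul,
      aux_aut_cancel, mul_assoc]

lemma aux_conj_inl_single (t : WreathProduct G H X) (y : X) (v : G) :
    t * inl (WreathBase.single X y v) * t⁻¹
      = inl (WreathBase.single X (t.right • y)
          ((t.left : X → G) (t.right • y) * v * ((t.left : X → G) (t.right • y))⁻¹)) := by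
  rw [aux_conj_inl, aux_wreathAut_single, aux_conj_single_base]

lemma aux_inl_mul_inr_left (c : WreathBase G X) (k : H) :
    (inl c * inr k : WreathProduct G H X).left = c := by
  simp [SemidirectProduct.mul_left, left_inl, left_inr, right_inl]

lemma aux_inl_mul_inr_right (c : WreathBase G X) (k : H) :
    (inl c * inr k : WreathProduct G H X).right = k := by
  simp [SemidirectProduct.mul_right, right_inl, right_inr]

lemma aux_conj_mixed (b σ : WreathBase G X) (k : H) :
    (inl b)⁻¹ * (inl σ * inr k) * inl b
      = (inl (b⁻¹ * σ * wreathAut G H X k b) * inr k : WreathProduct G H X) := by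
  refine aux_sdp_ext ?_ ?_ <;>
    simp [mul_left, mul_right, inv_left, inv_right, left_inl, right_inl, left_inr, right_inr,
      map_mul, aux_aut_cancel, mul_assoc]

lemma aux_pow_right (t : WreathProduct G H X) (m : ℕ) : (t ^ m).right = t.right ^ m := by
  have h : ∀ u : WreathProduct G H X, u.right = rightHom u := fun _ => rfl
  rw [h, h, map_pow]

lemma aux_conj_mem_iff {K : Type*} [Group K] (T : Subgroup K) {t : K} (ht : t ∈ T) (u : K) :
    t * u * t⁻¹ ∈ T ↔ u ∈ T := by
  constructor
  · intro h
    have h2 := mul_mem (mul_mem (inv_mem ht) h) ht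
    have e : t⁻¹ * (t * u * t⁻¹) * t = u := by group
    rwa [e] at h2
  · intro h
    exact mul_mem (mul_mem ht h) (inv_mem ht)

end AuxLemmas2
section AuxLemmas3

open scoped Classical

variable {G H X : Type*} [Group G] [Group H] [MulAction H X]

lemma aux_zpow_smul_add (k : H) (x : X) (i j : ℤ) :
    k ^ i • (k ^ j • x) = k ^ (i + j) • x := by
  rw [smul_smul, ← zpow_add]

lemma aux_periodic_finite {k : H} {x : X} {e : ℤ} (he : 0 < e) (hper : k ^ e • x = x) :
    (Set.range fun n : ℤ => k ^ n • x).Finite := by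
  have hneg : k ^ (-e) • x = x := by
    calc k ^ (-e) • x = k ^ (-e) • (k ^ e • x) := by rw [hper]
    _ = k ^ (-e + e) • x := aux_zpow_smul_add k x (-e) e
    _ = x := by rw [neg_add_cancel, zpow_zero, one_smul]
  have hmul : ∀ q : ℤ, k ^ (e * q) • x = x := by
    intro q
    induction q using Int.induction_on with
    | zero => rw [mul_zero, zpow_zero, one_smul]
    | succ i ih =>
      rw [show e * ((i : ℤ) + 1) = e + e * i by ring, ← aux_zpow_smul_add, ih, hper]
    | pred i ih =>
      rw [show e * (-(i : ℤ) - 1) = -e + e * (-(i : ℤ)) by ring, ← aux_zpow_smul_add, ih, hneg]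
  have hmod : ∀ n : ℤ, k ^ n • x = k ^ (n % e) • x := by
    intro n
    conv_lhs => rw [← Int.emod_add_mul_ediv n e]
    rw [← aux_zpow_smul_add, hmul]
  refine Set.Finite.subset
    (Set.Finite.image (fun r : ℤ => k ^ r • x) (Set.finite_Icc (0 : ℤ) (e - 1))) ?_
  rintro _ ⟨n, rfl⟩
  refine ⟨n % e, ?_, (hmod n).symm⟩
  have h1 := Int.emod_nonneg n (ne_of_gt he)
  have h2 := Int.emod_lt_of_pos n he
  exact ⟨h1, by omega⟩

lemma aux_inj_of_infinite {k : H} {x : X}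
    (hk : (Set.range fun n : ℤ => k ^ n • x).Infinite) :
    Function.Injective fun n : ℤ => k ^ n • x := by
  intro a b hab
  by_contra hne
  simp only at hab
  have hd : k ^ (a - b) • x = x := by
    have h1 : k ^ (-b) • (k ^ a • x) = k ^ (-b) • (k ^ b • x) := by rw [hab]
    rwa [aux_zpow_smul_add, aux_zpow_smul_add, neg_add_cancel, zpow_zero, one_smul,
      neg_add_eq_sub] at h1
  have hdneg : k ^ (b - a) • x = x := by
    calc k ^ (b - a) • x = k ^ (b - a) • (k ^ (a - b) • x) := by rw [hd]
    _ = k ^ (b - a + (a - b)) • x := aux_zpow_smul_add k x _ _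
    _ = x := by rw [show b - a + (a - b) = 0 by ring, zpow_zero, one_smul]
  rcases lt_trichotomy (a - b) 0 with hlt | heq | hgt
  · exact hk (aux_periodic_finite (by omega : (0:ℤ) < b - a) hdneg)
  · exact hne (by omega)
  · exact hk (aux_periodic_finite hgt hd)

lemma aux_bad_finite {k : H} {x : X} (hinj : Function.Injective fun n : ℤ => k ^ n • x)
    (b : WreathBase G X) : {j : ℤ | (b : X → G) (k ^ j • x) ≠ 1}.Finite := by
  have hb : (Function.mulSupport (b : X → G)).Finite := mem_wreathBase.mp b.2
  have he : {j : ℤ | (b : X → G) (k ^ j • x) ≠ 1}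
      = (fun n : ℤ => k ^ n • x) ⁻¹' (Function.mulSupport (b : X → G)) := rfl
  rw [he]
  exact Set.Finite.preimage (Set.injOn_of_injective hinj) hb

lemma aux_tele (b : WreathBase G X) (g : G) (k : H) (x : X)
    (hinj : Function.Injective fun n : ℤ => k ^ n • x) (m : ℕ) (j : ℤ) :
    ((((inl (b⁻¹ * WreathBase.single X x g * wreathAut G H X k b) * inr k :
        WreathProduct G H X)) ^ m).left : X → G) (k ^ j • x)
      = ((b : X → G) (k ^ j • x))⁻¹ * (if 0 ≤ j ∧ j < (m : ℤ) then g else 1)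
          * (b : X → G) (k ^ (j - (m : ℤ)) • x) := by
  induction m generalizing j with
  | zero =>
    rw [pow_zero, one_left, aux_wb_one_coe]
    rw [if_neg (by omega : ¬ (0 ≤ j ∧ j < ((0:ℕ) : ℤ)))]
    rw [show j - ((0:ℕ) : ℤ) = j by omega, mul_one, inv_mul_cancel]
  | succ m ih =>
    rw [pow_succ, SemidirectProduct.mul_left, aux_wb_mul_coe, ih]
    rw [aux_pow_right, aux_inl_mul_inr_right, aux_inl_mul_inr_left, aux_wreathAut_coe]
    have harg : ((k : H) ^ (m : ℕ))⁻¹ • ((k : H) ^ j • x) = k ^ (j - (m : ℤ)) • x := by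
      rw [← zpow_natCast k m, ← zpow_neg, aux_zpow_smul_add, neg_add_eq_sub]
    rw [harg]
    rw [aux_wb_mul_coe, aux_wb_mul_coe, aux_wb_inv_coe, aux_single_coe, aux_wreathAut_coe]
    have harg2 : (k : H)⁻¹ • ((k : H) ^ (j - (m : ℤ)) • x) = k ^ (j - (m : ℤ) - 1) • x := by
      rw [← zpow_neg_one, aux_zpow_smul_add, show (-1 : ℤ) + (j - (m : ℤ)) = j - (m:ℤ) - 1 by ring]
    rw [harg2]
    have hcond : ((k : H) ^ (j - (m : ℤ)) • x = x) ↔ j - (m : ℤ) = 0 := by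
      constructor
      · intro hh
        refine hinj (a₁ := j - (m : ℤ)) (a₂ := 0) ?_
        show k ^ (j - (m : ℤ)) • x = k ^ (0 : ℤ) • x
        rw [zpow_zero, one_smul]; exact hh
      · intro hh; rw [hh, zpow_zero, one_smul]
    by_cases h2 : j - (m : ℤ) = 0
    · rw [if_pos (hcond.mpr h2)]
      rw [if_neg (by omega : ¬ (0 ≤ j ∧ j < (m : ℤ)))]
      rw [if_pos (by push_cast; omega : (0 ≤ j ∧ j < ((m + 1 : ℕ) : ℤ)))]
      rw [show j - ((m + 1 : ℕ) : ℤ) = j - (m : ℤ) - 1 by push_cast; ring]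
      group
    · rw [if_neg (fun hh => h2 (hcond.mp hh))]
      have hIeq : (if 0 ≤ j ∧ j < ((m + 1 : ℕ) : ℤ) then g else 1)
          = (if 0 ≤ j ∧ j < (m : ℤ) then g else 1) := by
        by_cases h3 : 0 ≤ j ∧ j < (m : ℤ)
        · rw [if_pos h3, if_pos (by push_cast; omega)]
        · rw [if_neg h3, if_neg (by push_cast; omega)]
      rw [hIeq, show j - ((m + 1 : ℕ) : ℤ) = j - (m : ℤ) - 1 by push_cast; ring]
      group

lemma aux_engine {T : Subgroup (WreathProduct G H X)} {b : WreathBase G X} {g : G} {k : H}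
    {x : X} (hinj : Function.Injective fun n : ℤ => k ^ n • x)
    (ht : (inl (b⁻¹ * WreathBase.single X x g * wreathAut G H X k b) * inr k :
      WreathProduct G H X) ∈ T)
    (m : ℕ) (j : ℤ) (hbj : (b : X → G) (k ^ j • x) = 1)
    (hbjm : (b : X → G) (k ^ (j + (m : ℤ)) • x) = 1) (v : G) :
    inl (WreathBase.single X (k ^ j • x) v) ∈ T ↔
      inl (WreathBase.single X (k ^ (j + (m : ℤ)) • x)
        ((if 0 ≤ j + (m : ℤ) ∧ j + (m : ℤ) < (m : ℤ) then g else 1) * v *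
         (if 0 ≤ j + (m : ℤ) ∧ j + (m : ℤ) < (m : ℤ) then g else 1)⁻¹)) ∈ T := by
  set t : WreathProduct G H X :=
    inl (b⁻¹ * WreathBase.single X x g * wreathAut G H X k b) * inr k with hTdef
  have htm : t ^ m ∈ T := pow_mem ht m
  have key : t ^ m * inl (WreathBase.single X ((k : H) ^ j • x) v) * (t ^ m)⁻¹
      = inl (WreathBase.single X (k ^ (j + (m : ℤ)) • x)
        ((if 0 ≤ j + (m : ℤ) ∧ j + (m : ℤ) < (m : ℤ) then g else 1) * v *
         (if 0 ≤ j + (m : ℤ) ∧ j + (m : ℤ) < (m : ℤ) then g else 1)⁻¹)) := by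
    rw [aux_conj_inl_single]
    have hpt : (t ^ m).right • ((k : H) ^ j • x) = k ^ (j + (m : ℤ)) • x := by
      rw [aux_pow_right, hTdef, aux_inl_mul_inr_right, ← zpow_natCast k m,
        aux_zpow_smul_add, add_comm]
    rw [hpt]
    have hval : ((t ^ m).left : X → G) (k ^ (j + (m : ℤ)) • x)
        = (if 0 ≤ j + (m : ℤ) ∧ j + (m : ℤ) < (m : ℤ) then g else 1) := by
      rw [hTdef]
      rw [aux_tele b g k x hinj m (j + (m : ℤ))]
      rw [show j + (m : ℤ) - (m : ℤ) = j by ring, hbj, hbjm, inv_one, one_mul, mul_one]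
    rw [hval]
  rw [← key]
  exact (aux_conj_mem_iff T htm _).symm

end AuxLemmas3
section AuxLemmas4

open scoped Classical

variable {G H X : Type*} [Group G] [Group H] [MulAction H X]

lemma aux_singles_generate {T : Subgroup (WreathProduct G H X)}
    (hs : ∀ (p : X) (g : G), inl (WreathBase.single X p g) ∈ T) (f : WreathBase G X) :
    inl f ∈ T := by
  suffices h : ∀ (s : Finset X) (f : WreathBase G X),
      (∀ q : X, q ∉ s → (f : X → G) q = 1) → inl f ∈ T by
    refine h (mem_wreathBase.mp f.2).toFinset f ?_
    intro q hq
    by_contra hq1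
    exact hq ((mem_wreathBase.mp f.2).mem_toFinset.mpr hq1)
  intro s
  induction s using Finset.induction_on with
  | empty =>
    intro f hf
    have hf1 : f = 1 := Subtype.ext (funext fun q => hf q (Finset.notMem_empty q))
    rw [hf1, map_one]; exact one_mem T
  | @insert p s hp ih =>
    intro f hf
    have hf' : ∀ q : X, q ∉ s →
        ((WreathBase.single X p ((f : X → G) p)⁻¹ * f : WreathBase G X) : X → G) q = 1 := by
      intro q hq
      rw [aux_wb_mul_coe, aux_single_coe]
      by_cases hqp : q = p
      · subst hqp; rw [if_pos rfl, inv_mul_cancel]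
      · rw [if_neg hqp, one_mul]
        refine hf q ?_
        simp [Finset.mem_insert, hqp, hq]
    have h1 : inl (WreathBase.single X p ((f : X → G) p)⁻¹ * f) ∈ T := ih _ hf'
    have h2 : inl (WreathBase.single X p ((f : X → G) p)) ∈ T := hs p _
    have h3 := mul_mem h2 h1
    rw [← map_mul, ← mul_assoc, ← map_mul, mul_inv_cancel, map_one, one_mul] at h3
    exact h3

lemma aux_key_singles {T : Subgroup (WreathProduct G H X)}
    (htt : ¬ IsTorsionType H X)
    (hT1 : ∀ w : WreathProduct G H X, ∃ b : WreathBase G X, (inl b)⁻¹ * w * inl b ∈ T)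
    (hT2 : ∀ η : H, ∃ t ∈ T, t.right = η)
    (q : X) (g₀ : G) : inl (WreathBase.single X q g₀) ∈ T := by
  have htt' : ∃ x ∈ MulAction.orbit H q, ∃ k : H,
      (Set.range fun n : ℤ => k ^ n • x).Infinite := by
    by_contra hcon
    push_neg at hcon
    exact htt ⟨q, fun x hx k => hcon x hx k⟩
  obtain ⟨x, hxorb, k, hk⟩ := htt'
  have hinj : Function.Injective fun n : ℤ => k ^ n • x := aux_inj_of_infinite hk
  have hTg : ∀ g : G, ∃ b : WreathBase G X,
      (inl (b⁻¹ * WreathBase.single X x g * wreathAut G H X k b) * inr k :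
        WreathProduct G H X) ∈ T := by
    intro g
    obtain ⟨b, hb⟩ := hT1 (inl (WreathBase.single X x g) * inr k)
    rw [aux_conj_mixed] at hb
    exact ⟨b, hb⟩
  obtain ⟨b₁, hb₁⟩ := hTg 1
  obtain ⟨j₁, hj₁⟩ : ∃ j : ℤ, (b₁ : X → G) (k ^ j • x) = 1 := by
    obtain ⟨j, hj⟩ := (aux_bad_finite hinj b₁).infinite_compl.nonempty
    rw [Set.mem_compl_iff, Set.mem_setOf_eq, not_not] at hj
    exact ⟨j, hj⟩
  -- one-step constancy along good indices
  have hstep : ∀ j j' : ℤ, j ≤ j' → (b₁ : X → G) (k ^ j • x) = 1 →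
      (b₁ : X → G) (k ^ j' • x) = 1 → ∀ v : G,
      (inl (WreathBase.single X (k ^ j • x) v) ∈ T ↔
        inl (WreathBase.single X (k ^ j' • x) v) ∈ T) := by
    intro j j' hle hj hj' v
    have hm : (((j' - j).toNat : ℕ) : ℤ) = j' - j := Int.toNat_of_nonneg (by omega)
    have heng := aux_engine (b := b₁) (g := 1) hinj hb₁ (j' - j).toNat j hj
      (by rw [hm, show j + (j' - j) = j' by ring]; exact hj') v
    rw [hm, show j + (j' - j) = j' by ring] at heng
    simpa using heng
  have hconst : ∀ j : ℤ, (b₁ : X → G) (k ^ j • x) = 1 → ∀ v : G,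
      (inl (WreathBase.single X (k ^ j • x) v) ∈ T ↔
        inl (WreathBase.single X (k ^ j₁ • x) v) ∈ T) := by
    intro j hj v
    rcases le_total j j₁ with hle | hle
    · exact hstep j j₁ hle hj hj₁ v
    · exact (hstep j₁ j hle hj₁ hj v).symm
  -- normality
  have hnorm : ∀ g v : G, inl (WreathBase.single X (k ^ j₁ • x) v) ∈ T →
      inl (WreathBase.single X (k ^ j₁ • x) (g * v * g⁻¹)) ∈ T := by
    intro g v hv
    obtain ⟨bg, hbg⟩ := hTg g
    have hfin : ({j : ℤ | (b₁ : X → G) (k ^ j • x) ≠ 1} ∪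
        {j : ℤ | (bg : X → G) (k ^ j • x) ≠ 1}).Finite :=
      (aux_bad_finite hinj b₁).union (aux_bad_finite hinj bg)
    obtain ⟨j, hjmem⟩ := ((Set.Iio_infinite (0 : ℤ)).diff hfin).nonempty
    obtain ⟨j', hj'mem⟩ := ((Set.Ioi_infinite (0 : ℤ)).diff hfin).nonempty
    obtain ⟨hjlt, hjgood⟩ := hjmem
    obtain ⟨hj'gt, hj'good⟩ := hj'mem
    rw [Set.mem_union, not_or, Set.mem_setOf_eq, Set.mem_setOf_eq, not_not, not_not] at hjgood
    rw [Set.mem_union, not_or, Set.mem_setOf_eq, Set.mem_setOf_eq, not_not, not_not] at hj'good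
    rw [Set.mem_Iio] at hjlt
    rw [Set.mem_Ioi] at hj'gt
    have hm : (((j' - j).toNat : ℕ) : ℤ) = j' - j := Int.toNat_of_nonneg (by omega)
    have heng := aux_engine (b := bg) (g := g) hinj hbg (j' - j).toNat j hjgood.2
      (by rw [hm, show j + (j' - j) = j' by ring]; exact hj'good.2) v
    rw [hm, show j + (j' - j) = j' by ring] at heng
    rw [if_pos (by constructor <;> omega : (0:ℤ) ≤ j' ∧ j' < j' - j)] at heng
    have h1 : inl (WreathBase.single X (k ^ j • x) v) ∈ T := (hconst j hjgood.1 v).mpr hv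
    have h2 := heng.mp h1
    exact (hconst j' hj'good.1 (g * v * g⁻¹)).mp h2
  -- class covering
  have hcover : ∀ γ : G, ∃ d : G,
      inl (WreathBase.single X (k ^ j₁ • x) (d * γ * d⁻¹)) ∈ T := by
    intro γ
    obtain ⟨b, hb⟩ := hT1 (inl (WreathBase.single X (k ^ j₁ • x) γ))
    refine ⟨((b : X → G) (k ^ j₁ • x))⁻¹, ?_⟩
    rw [← map_inv, ← map_mul, ← map_mul] at hb
    rw [show b⁻¹ * WreathBase.single X (k ^ j₁ • x) γ * b
        = b⁻¹ * WreathBase.single X (k ^ j₁ • x) γ * (b⁻¹)⁻¹ by rw [inv_inv]] at hb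
    rw [aux_conj_single_base, aux_wb_inv_coe] at hb
    exact hb
  -- A = ⊤
  have hAtop : ∀ v : G, inl (WreathBase.single X (k ^ j₁ • x) v) ∈ T := by
    intro v
    obtain ⟨d, hd⟩ := hcover v
    have h1 := hnorm d⁻¹ _ hd
    rw [show d⁻¹ * (d * v * d⁻¹) * d⁻¹⁻¹ = v by group] at h1
    exact h1
  -- transport to q
  obtain ⟨h₁, hh₁⟩ := MulAction.mem_orbit_iff.mp hxorb
  obtain ⟨t, htT, htr⟩ := hT2 (h₁⁻¹ * k ^ (-j₁))
  have hq : t.right • (k ^ j₁ • x) = q := by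
    rw [htr, mul_smul, aux_zpow_smul_add, neg_add_cancel, zpow_zero, one_smul, ← hh₁,
      inv_smul_smul]
  have hv := hAtop (((t.left : X → G) q)⁻¹ * g₀ * (t.left : X → G) q)
  have hkey := aux_conj_inl_single t (k ^ j₁ • x)
    (((t.left : X → G) q)⁻¹ * g₀ * (t.left : X → G) q)
  rw [hq] at hkey
  rw [show (t.left : X → G) q * (((t.left : X → G) q)⁻¹ * g₀ * (t.left : X → G) q) *
      ((t.left : X → G) q)⁻¹ = g₀ by group] at hkey
  rw [← hkey]
  exact mul_mem (mul_mem htT hv) (inv_mem htT)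

end AuxLemmas4
theorem stmt_3 (G H X : Type*) [Group G] [Group H] [Nontrivial G] [Nontrivial H]
    [MulAction H X] [FaithfulSMul H X] (htt : ¬ IsTorsionType H X)
    (hfg : ¬ Group.FG (WreathProduct G H X)) (hH : IsFIG H) :
    IsIG (WreathProduct G H X) ∧ ¬ IsFIG (WreathProduct G H X) := by
  constructor
  · intro a
    set T : Subgroup (WreathProduct G H X) :=
      Subgroup.closure ((fun s => (a s)⁻¹ * s * a s) '' Set.univ) with hTdef
    have hgen : ∀ w : WreathProduct G H X, (a w)⁻¹ * w * a w ∈ T :=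
      fun w => Subgroup.subset_closure ⟨w, Set.mem_univ w, rfl⟩
    obtain ⟨SH, hSHfin, hSHinv⟩ := hH
    have hT2 : ∀ η : H, ∃ t ∈ T, t.right = η := by
      intro η
      have hcl := hSHinv (fun s => rightHom (a (inr s)))
      have hle : Subgroup.closure
          ((fun s => (rightHom (a (inr s)))⁻¹ * s * rightHom (a (inr s))) '' SH)
          ≤ Subgroup.map rightHom T := by
        rw [Subgroup.closure_le]
        rintro _ ⟨s, hs, rfl⟩
        refine ⟨(a (inr s))⁻¹ * inr s * a (inr s), hgen (inr s), ?_⟩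
        rw [map_mul, map_mul, map_inv, rightHom_inr]
      have hmem : η ∈ Subgroup.map rightHom T := hle (by rw [hcl]; exact Subgroup.mem_top η)
      obtain ⟨t, ht, hteq⟩ := hmem
      exact ⟨t, ht, hteq⟩
    have hT1 : ∀ w : WreathProduct G H X, ∃ b : WreathBase G X,
        (inl b)⁻¹ * w * inl b ∈ T := by
      intro w
      obtain ⟨t, htT, htr⟩ := hT2 (a w).right
      refine ⟨(a w).left * t.left⁻¹, ?_⟩
      have hbt : (inl ((a w).left * t.left⁻¹) : WreathProduct G H X) * t = a w := by
        refine aux_sdp_ext ?_ ?_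
        · rw [SemidirectProduct.mul_left, left_inl, right_inl, map_one, MulAut.one_apply,
            inv_mul_cancel_right]
        · rw [SemidirectProduct.mul_right, right_inl, one_mul, htr]
      have hb : (inl ((a w).left * t.left⁻¹) : WreathProduct G H X) = a w * t⁻¹ :=
        eq_mul_inv_of_mul_eq hbt
      rw [hb, show (a w * t⁻¹)⁻¹ * w * (a w * t⁻¹) = t * ((a w)⁻¹ * w * a w) * t⁻¹ by group]
      exact mul_mem (mul_mem htT (hgen w)) (inv_mem htT)
    have hsingles : ∀ (p : X) (g : G), inl (WreathBase.single X p g) ∈ T :=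
      fun p g => aux_key_singles htt hT1 hT2 p g
    have hbase : ∀ f : WreathBase G X, inl f ∈ T := aux_singles_generate hsingles
    rw [Subgroup.eq_top_iff']
    intro w
    obtain ⟨t, htT, htr⟩ := hT2 w.right
    have hwt : w * t⁻¹ = inl ((w * t⁻¹).left) := by
      refine aux_sdp_ext ?_ ?_
      · rw [left_inl]
      · rw [right_inl, SemidirectProduct.mul_right, inv_right, htr, mul_inv_cancel]
    have h2 : w * t⁻¹ ∈ T := by rw [hwt]; exact hbase _
    have h3 := mul_mem h2 htT
    rw [inv_mul_cancel_right] at h3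
    exact h3
  · intro hW
    obtain ⟨S, hSfin, hSinv⟩ := hW
    refine hfg ?_
    rw [Group.fg_iff]
    refine ⟨S, ?_, hSfin⟩
    have h := hSinv (fun _ => 1)
    simpa using h
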